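/- For a = r²(r² + s²)D²E, b = s²(r² + s²)C²D², c = 4r⁴s⁴C²E, where C = 5r⁶ + 3r⁴s² + 3r²s⁴ + s⁶, D = r⁸ + 2r⁶s² - 12r⁴s⁴ - 6r²s⁶ - s⁸, E = r¹² + 6r¹⁰s² + 87r⁸s⁴ + 108r⁶s⁶ + 55r⁴s⁸ + 14r²s¹⁰ + s¹², the three elementary symmetric functions a + b + c, ab + bc + ca, abc are all perfect squares. -/
import Mathlib

set_option maxHeartbeats 2000000 in
theorem gensol1 (r s : ℤ) :
    let C := 5 * r ^ 6 + 3 * r ^ 4 * s ^ 2 + 3 * r ^ 2 * s ^ 4 + s ^ 6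
    let D := r ^ 8 + 2 * r ^ 6 * s ^ 2 - 12 * r ^ 4 * s ^ 4 - 6 * r ^ 2 * s ^ 6 - s ^ 8
    let E := r ^ 12 + 6 * r ^ 10 * s ^ 2 + 87 * r ^ 8 * s ^ 4 + 108 * r ^ 6 * s ^ 6 +
      55 * r ^ 4 * s ^ 8 + 14 * r ^ 2 * s ^ 10 + s ^ 12
    let a := r ^ 2 * (r ^ 2 + s ^ 2) * D ^ 2 * E
    let b := s ^ 2 * (r ^ 2 + s ^ 2) * C ^ 2 * D ^ 2
    let c := 4 * r ^ 4 * s ^ 4 * C ^ 2 * E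
    (∃ f : ℤ, a + b + c = f ^ 2) ∧ (∃ g : ℤ, a * b + b * c + c * a = g ^ 2) ∧
      (∃ k : ℤ, a * b * c = k ^ 2) := by
  refine ⟨⟨(1*s^16 + 10*r^2*s^14 + 48*r^4*s^12 + 142*r^6*s^10 + 222*r^8*s^8 + 150*r^10*s^6 + 16*r^12*s^4 + 18*r^14*s^2 + 1*r^16), ?_⟩, ⟨(-1*r^1*s^31 - 25*r^3*s^29 - 261*r^5*s^27 - 1573*r^7*s^25 - 6189*r^9*s^23 - 16949*r^11*s^21 - 33489*r^13*s^19 - 48577*r^15*s^17 - 51571*r^17*s^15 - 37787*r^19*s^13 - 15263*r^21*s^11 - 95*r^23*s^9 + 2273*r^25*s^7 + 553*r^27*s^5 + 53*r^29*s^3 + 5*r^31*s^1), ?_⟩, ⟨(2*r^3*s^45 + 66*r^5*s^43 + 972*r^7*s^41 + 8636*r^9*s^39 + 52250*r^11*s^37 + 229674*r^13*s^35 + 763504*r^15*s^33 + 1972208*r^17*s^31 + 4031492*r^19*s^29 + 6583940*r^21*s^27 + 8572072*r^23*s^25 + 8721288*r^25*s^23 + 6590980*r^27*s^21 + 3234468*r^29*s^19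 + 444976*r^31*s^17 - 671696*r^33*s^15 - 428166*r^35*s^13 - 30406*r^37*s^11 + 25324*r^39*s^9 + 5788*r^41*s^7 + 610*r^43*s^5 + 50*r^45*s^3), ?_⟩⟩ <;> ring
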